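/- There is a universal constant c such that every monotone circuit C in zero-suppressed semantics that is upwards-deterministic admits a monotone circuit C' with S(C') = S(C), every gate of C' having fan-in at most two, |C'| ≤ c·|C|, such that C' is upwards-deterministic; moreover, if C is a d-DNNF in zero-suppressed semantics then C' can be chosen to also be one. -/

import Mathlib

/-- The type of a gate in a monotone circuit: variable gate, AND-gate, or OR-gate. -/
inductive GateType : Type
  | var
  | and
  | or
  deriving DecidableEq

/-- A monotone circuit: a finite DAG of gates with wires, a distinguished output gate,
each gate labeled as a variable gate (carrying a variable label in `ι`), an AND-gate,
or an OR-gate.  Variable gates have no inputs, and the wire relation is acyclic. -/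
structure Circuit (ι : Type) [DecidableEq ι] where
  Gate : Type
  fintypeGate : Fintype Gate
  decEqGate : DecidableEq Gate
  wire : Gate → Gate → Prop
  decWire : ∀ a b : Gate, Decidable (wire a b)
  typ : Gate → GateType
  vlab : Gate → ι
  output : Gate
  var_no_input : ∀ g g' : Gate, typ g' = GateType.var → ¬ wire g g'
  acyclic : ∀ g : Gate, ¬ Relation.TransGen wire g g

attribute [instance] Circuit.fintypeGate Circuit.decEqGate Circuit.decWire

namespace Circuit

variable {ι : Type} [DecidableEq ι]

/-- The inputs of a gate `g`: the gates with a wire to `g`. -/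
def inputs (C : Circuit ι) (g : C.Gate) : Finset C.Gate :=
  Finset.univ.filter fun g' => C.wire g' g

/-- The fan-in of a gate: its number of inputs. -/
def fanin (C : Circuit ι) (g : C.Gate) : ℕ :=
  (C.inputs g).card

/-- The gates that `g` is an input of. -/
def outs (C : Circuit ι) (g : C.Gate) : Finset C.Gate :=
  Finset.univ.filter fun g' => C.wire g g'

/-- The size of a circuit: its number of gates plus its number of wires. -/
noncomputable def size (C : Circuit ι) : ℕ :=
  Fintype.card C.Gate + {p : C.Gate × C.Gate | C.wire p.1 p.2}.ncard

/-- Zero-suppressed semantics: `Captures C g t` says that the assignment `t`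
(a finite set of variables) belongs to the set captured by gate `g`, defined bottom-up:
a variable gate captures exactly its own singleton; an AND-gate captures the unions of
assignments captured by its inputs (one from each input); an OR-gate captures the union
of the sets captured by its inputs. -/
inductive Captures (C : Circuit ι) : C.Gate → Finset ι → Prop
  | var (g : C.Gate) (h : C.typ g = GateType.var) : Captures C g {C.vlab g}
  | and (g : C.Gate) (h : C.typ g = GateType.and) (f : C.Gate → Finset ι)
      (hf : ∀ g' ∈ C.inputs g, Captures C g' (f g')) :
      Captures C g ((C.inputs g).biUnion f)
  | or (g : C.Gate) (h : C.typ g = GateType.or) (g' : C.Gate) (hg' : g' ∈ C.inputs g)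
      (t : Finset ι) (ht : Captures C g' t) : Captures C g t

/-- The set `S(g)` of assignments captured by a gate `g` in zero-suppressed semantics. -/
def S (C : Circuit ι) (g : C.Gate) : Set (Finset ι) :=
  {t | C.Captures g t}

/-- The captured set `S(C)` of the circuit: the captured set of its output gate. -/
def captured (C : Circuit ι) : Set (Finset ι) :=
  C.S C.output

/-- `C.Reaches g g'` holds when there is a (possibly empty) directed path of wires
from `g` to `g'`. -/
def Reaches (C : Circuit ι) : C.Gate → C.Gate → Prop :=
  Relation.ReflTransGen C.wire

/-- An AND-gate is decomposable if no variable gate has directed paths to two distinct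
inputs of it. -/
def DecomposableAnd (C : Circuit ι) (g : C.Gate) : Prop :=
  ∀ v g1 g2 : C.Gate, C.typ v = GateType.var → g1 ∈ C.inputs g → g2 ∈ C.inputs g →
    g1 ≠ g2 → C.Reaches v g1 → C.Reaches v g2 → False

/-- An OR-gate is deterministic if the captured sets of any two distinct inputs
are disjoint. -/
def DeterministicOr (C : Circuit ι) (g : C.Gate) : Prop :=
  ∀ g1 g2 : C.Gate, g1 ∈ C.inputs g → g2 ∈ C.inputs g → g1 ≠ g2 →
    Disjoint (C.S g1) (C.S g2)

/-- A circuit is a d-DNNF in zero-suppressed semantics if every AND-gate is decomposable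
and every OR-gate is deterministic. -/
def dDNNF (C : Circuit ι) : Prop :=
  (∀ g : C.Gate, C.typ g = GateType.and → C.DecomposableAnd g) ∧
  (∀ g : C.Gate, C.typ g = GateType.or → C.DeterministicOr g)

/-- Distinct variable gates carry distinct variable labels (i.e., variables can be
identified with variable gates, as in the paper). -/
def VarInj (C : Circuit ι) : Prop :=
  Set.InjOn C.vlab {g : C.Gate | C.typ g = GateType.var}

/-- `C` is ∅-pruned: every gate captures a nonempty set (no gate is unsatisfiable). -/
def EmptyPruned (C : Circuit ι) : Prop :=
  ∀ g : C.Gate, (C.S g).Nonempty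

/-- `C` is {}-pruned: no gate captures a set containing the empty assignment. -/
def ZeroPruned (C : Circuit ι) : Prop :=
  ∀ g : C.Gate, (∅ : Finset ι) ∉ C.S g

/-- An exit: an OR-gate having an input which is not an OR-gate. -/
def IsExit (C : Circuit ι) (g : C.Gate) : Prop :=
  C.typ g = GateType.or ∧ ∃ g' ∈ C.inputs g, C.typ g' ≠ GateType.or

/-- A normal circuit: arity-two, ∅-pruned, {}-pruned, collapsed, and discriminative. -/
def Normal (C : Circuit ι) : Prop :=
  (∀ g : C.Gate, C.fanin g ≤ 2) ∧
  C.EmptyPruned ∧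
  C.ZeroPruned ∧
  (∀ g : C.Gate, C.typ g = GateType.and → C.fanin g ≠ 1) ∧
  (∀ g : C.Gate, C.IsExit g →
    C.fanin g = 1 ∧ (C.outs g).card = 1 ∧ ∀ g' : C.Gate, C.wire g g' → C.typ g' = GateType.or)

/-- A wire both of whose endpoints are OR-gates. -/
def orWire (C : Circuit ι) (a b : C.Gate) : Prop :=
  C.wire a b ∧ C.typ a = GateType.or ∧ C.typ b = GateType.or

/-- The OR-component of an OR-gate `g`: the OR-gates connected to `g` by paths
traversing, in either direction, only wires both of whose endpoints are OR-gates. -/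
def orComponent (C : Circuit ι) (g : C.Gate) : Set C.Gate :=
  {g' : C.Gate | C.typ g' = GateType.or ∧
    Relation.ReflTransGen (fun x y => C.orWire x y ∨ C.orWire y x) g g'}

/-- The exits of an OR-gate `g`: the exits of its OR-component having a directed path
to `g` within the OR-component. -/
def exitsOf (C : Circuit ι) (g : C.Gate) : Set C.Gate :=
  {e : C.Gate | C.IsExit e ∧ Relation.ReflTransGen C.orWire e g}

/-- An OR-path of `C`: a directed path (of length at least one) all of whose
intermediate gates are OR-gates. -/
inductive OrPath (C : Circuit ι) : C.Gate → C.Gate → Prop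
  | single (a b : C.Gate) (h : C.wire a b) : OrPath C a b
  | step (a m b : C.Gate) (h : C.wire a m) (hm : C.typ m = GateType.or)
      (hp : OrPath C m b) : OrPath C a b

/-- A gate is 0-valid if it captures the empty assignment. -/
def ZeroValid (C : Circuit ι) (g : C.Gate) : Prop :=
  (∅ : Finset ι) ∈ C.S g

/-- A wire `(g, g')` is pure if `g'` is an OR-gate, or `g'` is an AND-gate all of whose
other inputs are 0-valid. -/
def PureWire (C : Circuit ι) (g g' : C.Gate) : Prop :=
  C.wire g g' ∧
    (C.typ g' = GateType.or ∨
      (C.typ g' = GateType.and ∧ ∀ h ∈ C.inputs g', h ≠ g → C.ZeroValid h))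

/-- A gate `g` is upwards-deterministic if it is unsatisfiable or there is at most one
gate `g'` such that `(g, g')` is a pure wire. -/
def UpDetGate (C : Circuit ι) (g : C.Gate) : Prop :=
  C.S g = ∅ ∨ ∀ g1 g2 : C.Gate, C.PureWire g g1 → C.PureWire g g2 → g1 = g2

/-- A circuit is upwards-deterministic if all its AND-gates and OR-gates are. -/
def UpwardsDeterministic (C : Circuit ι) : Prop :=
  ∀ g : C.Gate, (C.typ g = GateType.and ∨ C.typ g = GateType.or) → C.UpDetGate g

end Circuit
namespace Circuit

variable {ι : Type} [DecidableEq ι]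

lemma mem_inputs {C : Circuit ι} {a g : C.Gate} : a ∈ C.inputs g ↔ C.wire a g := by
  simp [inputs]

lemma fanin_var {C : Circuit ι} {g : C.Gate} (h : C.typ g = GateType.var) :
    C.fanin g = 0 := by
  have : C.inputs g = ∅ := by
    ext a; simp only [mem_inputs, Finset.notMem_empty, iff_false]
    exact C.var_no_input a g h
  simp [fanin, this]

lemma S_var {C : Circuit ι} {g : C.Gate} (h : C.typ g = GateType.var) :
    C.S g = {({C.vlab g} : Finset ι)} := by
  ext t
  constructor
  · intro ht
    cases ht with
    | var => rfl
    | and g h' f hf => rw [h] at h'; cases h'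
    | or g h' g' hg' t ht => rw [h] at h'; cases h'
  · rintro rfl
    exact Captures.var g h

lemma mem_S_and {C : Circuit ι} {g : C.Gate} (h : C.typ g = GateType.and) {t : Finset ι} :
    t ∈ C.S g ↔ ∃ f : C.Gate → Finset ι,
      (∀ x ∈ C.inputs g, f x ∈ C.S x) ∧ t = (C.inputs g).biUnion f := by
  constructor
  · intro ht
    cases ht with
    | var g h' => rw [h] at h'; cases h'
    | and g h' f hf => exact ⟨f, hf, rfl⟩
    | or g h' g' hg' t ht => rw [h] at h'; cases h'
  · rintro ⟨f, hf, rfl⟩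
    exact Captures.and g h f hf

lemma mem_S_or {C : Circuit ι} {g : C.Gate} (h : C.typ g = GateType.or) {t : Finset ι} :
    t ∈ C.S g ↔ ∃ x ∈ C.inputs g, t ∈ C.S x := by
  constructor
  · intro ht
    cases ht with
    | var g h' => rw [h] at h'; cases h'
    | and g h' f hf => rw [h] at h'; cases h'
    | or g h' g' hg' t ht => exact ⟨g', hg', ht⟩
  · rintro ⟨x, hx, ht⟩
    exact Captures.or g h x hx t ht

/-- Zero-suppressed AND-semantics of a list of gates. -/
def andSem (C : Circuit ι) : List C.Gate → Set (Finset ι)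
  | [] => {∅}
  | x :: r => {t | ∃ t1 ∈ C.S x, ∃ t2 ∈ C.andSem r, t = t1 ∪ t2}

/-- Zero-suppressed OR-semantics of a list of gates. -/
def orSem (C : Circuit ι) : List C.Gate → Set (Finset ι)
  | [] => ∅
  | x :: r => C.S x ∪ C.orSem r

lemma mem_orSem {C : Circuit ι} {l : List C.Gate} {t : Finset ι} :
    t ∈ C.orSem l ↔ ∃ x ∈ l, t ∈ C.S x := by
  induction l with
  | nil => simp [orSem]
  | cons x r ih => simp [orSem, ih]

lemma andSem_singleton {C : Circuit ι} {x : C.Gate} : C.andSem [x] = C.S x := by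
  ext t
  simp only [andSem, Set.mem_setOf_eq, Set.mem_singleton_iff]
  constructor
  · rintro ⟨t1, ht1, t2, rfl, rfl⟩; simpa using ht1
  · intro ht; exact ⟨t, ht, ∅, rfl, by simp⟩

lemma empty_mem_andSem {C : Circuit ι} {l : List C.Gate} :
    (∅ : Finset ι) ∈ C.andSem l ↔ ∀ x ∈ l, (∅ : Finset ι) ∈ C.S x := by
  induction l with
  | nil => simp [andSem]
  | cons x r ih =>
    simp only [andSem, Set.mem_setOf_eq, List.mem_cons]
    constructor
    · rintro ⟨t1, ht1, t2, ht2, he⟩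
      have h1 : t1 = ∅ := by
        have := Finset.union_eq_empty.mp he.symm; exact this.1
      have h2 : t2 = ∅ := by
        have := Finset.union_eq_empty.mp he.symm; exact this.2
      subst h1; subst h2
      intro y hy
      rcases hy with rfl | hy
      · exact ht1
      · exact ih.mp ht2 y hy
    · intro hall
      exact ⟨∅, hall x (Or.inl rfl), ∅, ih.mpr (fun y hy => hall y (Or.inr hy)), by simp⟩

lemma andSem_eq_exists {C : Circuit ι} {l : List C.Gate} (hn : l.Nodup) :
    C.andSem l = {t | ∃ f : C.Gate → Finset ι,
      (∀ x ∈ l, f x ∈ C.S x) ∧ t = l.toFinset.biUnion f} := by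
  induction l with
  | nil =>
    ext t; simp [andSem]
  | cons x r ih =>
    have hx : x ∉ r := (List.nodup_cons.mp hn).1
    have hr : r.Nodup := (List.nodup_cons.mp hn).2
    ext t
    simp only [andSem, Set.mem_setOf_eq]
    constructor
    · rintro ⟨t1, ht1, t2, ht2, rfl⟩
      rw [ih hr] at ht2
      obtain ⟨f2, hf2, rfl⟩ := ht2
      refine ⟨fun y => if y = x then t1 else f2 y, ?_, ?_⟩
      · intro y hy
        rcases List.mem_cons.mp hy with rfl | hy
        · simp [ht1]
        · have hyx : y ≠ x := fun h => hx (h ▸ hy)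
          simp [hyx, hf2 y hy]
      · rw [List.toFinset_cons, Finset.biUnion_insert]
        congr 1
        · simp
        · apply Finset.biUnion_congr rfl
          intro y hy
          have hyx : y ≠ x := fun h => hx (h ▸ List.mem_toFinset.mp hy)
          simp [hyx]
    · rintro ⟨f, hf, rfl⟩
      refine ⟨f x, hf x (List.mem_cons_self), r.toFinset.biUnion f, ?_, ?_⟩
      · rw [ih hr]
        exact ⟨f, fun y hy => hf y (List.mem_cons_of_mem x hy), rfl⟩
      · rw [List.toFinset_cons, Finset.biUnion_insert]

lemma S_eq_andSem {C : Circuit ι} {g : C.Gate} (h : C.typ g = GateType.and)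
    {l : List C.Gate} (hn : l.Nodup) (hto : l.toFinset = C.inputs g) :
    C.S g = C.andSem l := by
  ext t
  rw [mem_S_and h, andSem_eq_exists hn]
  simp only [Set.mem_setOf_eq, ← hto]
  constructor
  · rintro ⟨f, hf, rfl⟩
    exact ⟨f, fun x hx => hf x (hto ▸ List.mem_toFinset.mpr hx), rfl⟩
  · rintro ⟨f, hf, rfl⟩
    exact ⟨f, fun x hx => hf x (List.mem_toFinset.mp (hto ▸ hx)), rfl⟩

lemma S_eq_orSem {C : Circuit ι} {g : C.Gate} (h : C.typ g = GateType.or)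
    {l : List C.Gate} (hto : l.toFinset = C.inputs g) :
    C.S g = C.orSem l := by
  ext t
  rw [mem_S_or h, mem_orSem]
  constructor
  · rintro ⟨x, hx, ht⟩
    exact ⟨x, List.mem_toFinset.mp (hto ▸ hx), ht⟩
  · rintro ⟨x, hx, ht⟩
    exact ⟨x, hto ▸ List.mem_toFinset.mpr hx, ht⟩

end Circuit
namespace Circuit

variable {ι : Type} [DecidableEq ι]

noncomputable instance zeroValidDec (C : Circuit ι) : DecidablePred C.ZeroValid :=
  Classical.decPred _

/-- The inputs of `g`, listed with the 0-valid ones first. -/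
noncomputable def inList (C : Circuit ι) (g : C.Gate) : List C.Gate :=
  ((C.inputs g).filter (fun x => C.ZeroValid x)).toList ++
  ((C.inputs g).filter (fun x => ¬ C.ZeroValid x)).toList

lemma inList_nodup (C : Circuit ι) (g : C.Gate) : (C.inList g).Nodup := by
  refine List.Nodup.append (Finset.nodup_toList _) (Finset.nodup_toList _) ?_
  intro x hx hx'
  rw [Finset.mem_toList, Finset.mem_filter] at hx hx'
  exact hx'.2 hx.2

lemma sorted_append_aux {α : Type*} {P : α → Prop} {l1 l2 : List α}
    (h1 : ∀ x ∈ l1, P x) (h2 : ∀ x ∈ l2, ¬ P x) {i j : ℕ} (hij : i ≤ j)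
    (hj : j < (l1 ++ l2).length)
    (hz : P ((l1 ++ l2)[j]'hj)) : P ((l1 ++ l2)[i]'(lt_of_le_of_lt hij hj)) := by
  rcases Nat.lt_or_ge j l1.length with hlt | hge
  · have hi : i < l1.length := lt_of_le_of_lt hij hlt
    rw [List.getElem_append_left hi]
    exact h1 _ (List.getElem_mem _)
  · exfalso
    rw [List.getElem_append_right hge] at hz
    exact h2 _ (List.getElem_mem _) hz

lemma mem_inList {C : Circuit ι} {g x : C.Gate} : x ∈ C.inList g ↔ x ∈ C.inputs g := by
  rw [inList]
  constructor
  · intro h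
    rcases List.mem_append.mp h with h | h <;>
      exact (Finset.mem_filter.mp (Finset.mem_toList.mp h)).1
  · intro h
    by_cases hz : C.ZeroValid x
    · exact List.mem_append.mpr (Or.inl (Finset.mem_toList.mpr (Finset.mem_filter.mpr ⟨h, hz⟩)))
    · exact List.mem_append.mpr (Or.inr (Finset.mem_toList.mpr (Finset.mem_filter.mpr ⟨h, hz⟩)))

lemma inList_toFinset (C : Circuit ι) (g : C.Gate) :
    (C.inList g).toFinset = C.inputs g := by
  ext x; rw [List.mem_toFinset, mem_inList]

lemma inList_length (C : Circuit ι) (g : C.Gate) : (C.inList g).length = C.fanin g := by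
  rw [fanin, ← inList_toFinset, List.toFinset_card_of_nodup (C.inList_nodup g)]

/-- Sorting property: if a later entry is 0-valid, so is any earlier one. -/
lemma inList_sorted (C : Circuit ι) (g : C.Gate) {i j : ℕ} (hij : i ≤ j)
    (hj : j < (C.inList g).length)
    (hz : C.ZeroValid ((C.inList g)[j]'hj)) :
    C.ZeroValid ((C.inList g)[i]'(lt_of_le_of_lt hij hj)) :=
  sorted_append_aux
    (fun x hx => (Finset.mem_filter.mp (Finset.mem_toList.mp hx)).2)
    (fun x hx => (Finset.mem_filter.mp (Finset.mem_toList.mp hx)).2) hij hj hz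

/-- The `i`-th input of `g` (junk value out of range). -/
noncomputable def idx (C : Circuit ι) (g : C.Gate) (i : ℕ) : C.Gate :=
  (C.inList g).getD i C.output

lemma idx_eq_getElem {C : Circuit ι} {g : C.Gate} {i : ℕ} (h : i < C.fanin g) :
    C.idx g i = (C.inList g)[i]'(by rwa [inList_length]) := by
  rw [idx, List.getD_eq_getElem]

lemma idx_mem {C : Circuit ι} {g : C.Gate} {i : ℕ} (h : i < C.fanin g) :
    C.idx g i ∈ C.inputs g := by
  rw [idx_eq_getElem h, ← mem_inList]
  exact List.getElem_mem _

lemma wire_idx {C : Circuit ι} {g : C.Gate} {i : ℕ} (h : i < C.fanin g) :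
    C.wire (C.idx g i) g := mem_inputs.mp (idx_mem h)

lemma idx_inj {C : Circuit ι} {g : C.Gate} {i j : ℕ} (hi : i < C.fanin g)
    (hj : j < C.fanin g) (h : C.idx g i = C.idx g j) : i = j := by
  rw [idx_eq_getElem hi, idx_eq_getElem hj] at h
  exact (List.Nodup.getElem_inj_iff (C.inList_nodup g)).mp h

lemma idx_sorted {C : Circuit ι} {g : C.Gate} {i j : ℕ} (hij : i ≤ j) (hj : j < C.fanin g)
    (hz : C.ZeroValid (C.idx g j)) : C.ZeroValid (C.idx g i) := by
  rw [idx_eq_getElem hj] at hz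
  rw [idx_eq_getElem (lt_of_le_of_lt hij hj)]
  exact C.inList_sorted g hij _ hz

lemma mem_inputs_exists_idx {C : Circuit ι} {g x : C.Gate} (h : x ∈ C.inputs g) :
    ∃ i, i < C.fanin g ∧ x = C.idx g i := by
  rw [← mem_inList] at h
  obtain ⟨i, hi, hx⟩ := List.mem_iff_getElem.mp h
  rw [inList_length] at hi
  exact ⟨i, hi, by rw [idx_eq_getElem hi, hx]⟩

lemma mem_drop_inList {C : Circuit ι} {g x : C.Gate} {b : ℕ} :
    x ∈ (C.inList g).drop b ↔ ∃ i, b ≤ i ∧ i < C.fanin g ∧ x = C.idx g i := by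
  constructor
  · intro hx
    obtain ⟨j, hj, hget⟩ := List.mem_iff_getElem.mp hx
    have hj' : j < (C.inList g).length - b := by simpa using hj
    have hbj : b + j < C.fanin g := by rw [← inList_length]; omega
    refine ⟨b + j, by omega, hbj, ?_⟩
    rw [idx_eq_getElem hbj, ← hget, List.getElem_drop]
  · rintro ⟨i, hbi, hi, rfl⟩
    have hi' : i < (C.inList g).length := by rwa [inList_length]
    have hj : i - b < ((C.inList g).drop b).length := by simp; omega
    rw [idx_eq_getElem hi]
    have : ((C.inList g).drop b)[i - b]'hj = (C.inList g)[b + (i - b)]'(by omega) :=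
      List.getElem_drop
    have he : (C.inList g)[b + (i - b)]'(by omega) = (C.inList g)[i]'hi' := by
      congr 1; omega
    rw [← he, ← this]
    exact List.getElem_mem _

lemma drop_inList_cons {C : Circuit ι} {g : C.Gate} {b : ℕ} (h : b < C.fanin g) :
    (C.inList g).drop b = C.idx g b :: (C.inList g).drop (b + 1) := by
  rw [idx_eq_getElem h]
  exact List.drop_eq_getElem_cons (by rwa [inList_length])

lemma drop_inList_nil {C : Circuit ι} {g : C.Gate} {b : ℕ} (h : C.fanin g ≤ b) :
    (C.inList g).drop b = [] :=
  List.drop_eq_nil_of_le (by rwa [inList_length])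

end Circuit
namespace Circuit

variable {ι : Type} [DecidableEq ι]

/-- Auxiliary chain nodes. -/
abbrev Ext (C : Circuit ι) : Type := Σ g : C.Gate, Fin (C.fanin g - 2)

/-- The wire relation of the arity-two version of `C`. -/
def wire2 (C : Circuit ι) : (C.Gate ⊕ C.Ext) → (C.Gate ⊕ C.Ext) → Prop
  | a, Sum.inl g =>
      if 3 ≤ C.fanin g then
        a = Sum.inl (C.idx g 0) ∨
          ∃ j : Fin (C.fanin g - 2), (j : ℕ) = 0 ∧ a = Sum.inr ⟨g, j⟩
      else ∃ x, a = Sum.inl x ∧ C.wire x g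
  | a, Sum.inr ⟨g, j⟩ =>
      a = Sum.inl (C.idx g ((j : ℕ) + 1)) ∨
      (∃ j' : Fin (C.fanin g - 2), (j' : ℕ) = (j : ℕ) + 1 ∧ a = Sum.inr ⟨g, j'⟩) ∨
      ((j : ℕ) + 1 = C.fanin g - 2 ∧ a = Sum.inl (C.idx g ((j : ℕ) + 2)))

/-- Height of a gate: number of gates strictly below it. -/
noncomputable def ht (C : Circuit ι) (g : C.Gate) : ℕ :=
  (@Finset.filter _ (fun x => Relation.TransGen C.wire x g)
    (Classical.decPred _) Finset.univ).card

lemma ht_lt {C : Circuit ι} {a b : C.Gate} (h : C.wire a b) : C.ht a < C.ht b := by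
  classical
  apply Finset.card_lt_card
  rw [Finset.ssubset_iff_of_subset]
  · refine ⟨a, ?_, ?_⟩
    · simp only [Finset.mem_filter, Finset.mem_univ, true_and]
      exact Relation.TransGen.single h
    · simp only [Finset.mem_filter, Finset.mem_univ, true_and]
      exact C.acyclic a
  · intro x hx
    simp only [Finset.mem_filter, Finset.mem_univ, true_and] at hx ⊢
    exact Relation.TransGen.tail hx h

/-- Measure on the gates of the arity-two version, increasing along wires. -/
noncomputable def msr (C : Circuit ι) : (C.Gate ⊕ C.Ext) → ℕ
  | Sum.inl g => (Fintype.card C.Gate + 2) * (C.ht g + 1)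
  | Sum.inr ⟨g, j⟩ => (Fintype.card C.Gate + 2) * (C.ht g + 1) - ((j : ℕ) + 1)

lemma fanin_le_card (C : Circuit ι) (g : C.Gate) : C.fanin g ≤ Fintype.card C.Gate :=
  Finset.card_le_univ _

lemma msr_lt_of_wire {C : Circuit ι} {x g : C.Gate} (h : C.wire x g) :
    ∀ r : ℕ, r ≤ Fintype.card C.Gate + 1 →
      C.msr (Sum.inl x) < (Fintype.card C.Gate + 2) * (C.ht g + 1) - r := by
  intro r hr
  have h1 : C.ht x + 1 ≤ C.ht g := ht_lt h
  have h2 : (Fintype.card C.Gate + 2) * (C.ht x + 1) ≤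
      (Fintype.card C.Gate + 2) * C.ht g := Nat.mul_le_mul_left _ h1
  have h3 : (Fintype.card C.Gate + 2) * (C.ht g + 1) =
      (Fintype.card C.Gate + 2) * C.ht g + (Fintype.card C.Gate + 2) := by ring
  simp only [msr]
  omega

lemma msr_lt {C : Circuit ι} {a b : C.Gate ⊕ C.Ext} (h : C.wire2 a b) :
    C.msr a < C.msr b := by
  have hK := C.fanin_le_card
  rcases b with g | ⟨g, j⟩
  · simp only [wire2] at h
    split_ifs at h with h3
    · rcases h with rfl | ⟨j, hj0, rfl⟩
      · have := msr_lt_of_wire (C.wire_idx (show 0 < C.fanin g by omega)) 0 (by omega)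
        simpa [msr] using this
      · simp only [msr]
        have hjlt : (j : ℕ) < C.fanin g - 2 := j.isLt
        have : 0 < (Fintype.card C.Gate + 2) * (C.ht g + 1) := Nat.mul_pos (by omega) (by omega)
        omega
    · obtain ⟨x, rfl, hw⟩ := h
      have := msr_lt_of_wire hw 0 (by omega)
      simpa [msr] using this
  · have hjlt : (j : ℕ) < C.fanin g - 2 := j.isLt
    have hfg : 3 ≤ C.fanin g := by omega
    have hKg := hK g
    simp only [wire2] at h
    rcases h with rfl | ⟨j', hj', rfl⟩ | ⟨hj, rfl⟩
    · have hlt : (j : ℕ) + 1 < C.fanin g := by omega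
      exact msr_lt_of_wire (C.wire_idx hlt) ((j : ℕ) + 1) (by omega)
    · simp only [msr]
      have hjlt' : (j' : ℕ) < C.fanin g - 2 := j'.isLt
      have hB : Fintype.card C.Gate + 2 ≤ (Fintype.card C.Gate + 2) * (C.ht g + 1) :=
        Nat.le_mul_of_pos_right _ (by omega)
      omega
    · have hlt : (j : ℕ) + 2 < C.fanin g := by omega
      exact msr_lt_of_wire (C.wire_idx hlt) ((j : ℕ) + 1) (by omega)

lemma msr_lt_trans {C : Circuit ι} {a b : C.Gate ⊕ C.Ext}
    (h : Relation.TransGen C.wire2 a b) : C.msr a < C.msr b := by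
  induction h with
  | single h => exact msr_lt h
  | tail _ h ih => exact lt_trans ih (msr_lt h)

/-- The arity-two version of `C`. -/
@[reducible] noncomputable def bin (C : Circuit ι) : Circuit ι where
  Gate := C.Gate ⊕ C.Ext
  fintypeGate := inferInstance
  decEqGate := inferInstance
  wire := C.wire2
  decWire := fun _ _ => Classical.dec _
  typ := Sum.elim C.typ (fun p => C.typ p.1)
  vlab := Sum.elim C.vlab (fun p => C.vlab p.1)
  output := Sum.inl C.output
  var_no_input := by
    rintro a (g | ⟨g, j⟩) htyp
    · have hv : C.typ g = GateType.var := htyp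
      have h0 : C.fanin g = 0 := fanin_var hv
      simp only [wire2]
      rw [if_neg (by omega)]
      rintro ⟨x, rfl, hw⟩
      exact C.var_no_input x g hv hw
    · have hv : C.typ g = GateType.var := htyp
      have h0 : C.fanin g = 0 := fanin_var hv
      have := j.isLt
      omega
  acyclic := fun g h => lt_irrefl _ (msr_lt_trans h)

lemma bin_typ_inl {C : Circuit ι} {g : C.Gate} : C.bin.typ (Sum.inl g) = C.typ g := rfl

lemma bin_typ_inr {C : Circuit ι} {g : C.Gate} {j : Fin (C.fanin g - 2)} :
    C.bin.typ (Sum.inr ⟨g, j⟩) = C.typ g := rfl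

lemma fanin_pos_of_ext {C : Circuit ι} {g : C.Gate} (j : Fin (C.fanin g - 2)) :
    3 ≤ C.fanin g := by
  have := j.isLt; omega

lemma bin_inputs_small {C : Circuit ι} {g : C.Gate} (h : C.fanin g ≤ 2) :
    C.bin.inputs (Sum.inl g) = (C.inputs g).image Sum.inl := by
  ext a
  simp only [mem_inputs, Finset.mem_image]
  rw [mem_inputs]
  show C.wire2 a (Sum.inl g) ↔ _
  simp only [wire2]
  rw [if_neg (by omega)]
  constructor
  · rintro ⟨x, rfl, hw⟩; exact ⟨x, hw, rfl⟩
  · rintro ⟨x, hx, rfl⟩; exact ⟨x, rfl, hx⟩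

lemma bin_inputs_big {C : Circuit ι} {g : C.Gate} (h : 3 ≤ C.fanin g) :
    C.bin.inputs (Sum.inl g) =
      {Sum.inl (C.idx g 0), Sum.inr ⟨g, ⟨0, by omega⟩⟩} := by
  ext a
  simp only [mem_inputs, Finset.mem_insert, Finset.mem_singleton]
  rw [mem_inputs]
  show C.wire2 a (Sum.inl g) ↔ _
  simp only [wire2]
  rw [if_pos h]
  constructor
  · rintro (rfl | ⟨j, hj0, rfl⟩)
    · exact Or.inl rfl
    · refine Or.inr ?_
      congr 1
      exact Sigma.ext rfl (heq_of_eq (Fin.ext hj0))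
  · rintro (rfl | rfl)
    · exact Or.inl rfl
    · exact Or.inr ⟨⟨0, by omega⟩, rfl, rfl⟩

lemma bin_inputs_mid {C : Circuit ι} {g : C.Gate} {j : Fin (C.fanin g - 2)}
    (h : (j : ℕ) + 1 < C.fanin g - 2) :
    C.bin.inputs (Sum.inr ⟨g, j⟩) =
      {Sum.inl (C.idx g ((j : ℕ) + 1)), Sum.inr ⟨g, ⟨(j : ℕ) + 1, h⟩⟩} := by
  ext a
  simp only [mem_inputs, Finset.mem_insert, Finset.mem_singleton]
  rw [mem_inputs]
  show C.wire2 a (Sum.inr ⟨g, j⟩) ↔ _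
  simp only [wire2]
  constructor
  · rintro (rfl | ⟨j', hj', rfl⟩ | ⟨hj, rfl⟩)
    · exact Or.inl rfl
    · refine Or.inr ?_
      congr 1
      exact Sigma.ext rfl (heq_of_eq (Fin.ext hj'))
    · omega
  · rintro (rfl | rfl)
    · exact Or.inl rfl
    · exact Or.inr (Or.inl ⟨⟨(j : ℕ) + 1, h⟩, rfl, rfl⟩)

lemma bin_inputs_last {C : Circuit ι} {g : C.Gate} {j : Fin (C.fanin g - 2)}
    (h : (j : ℕ) + 1 = C.fanin g - 2) :
    C.bin.inputs (Sum.inr ⟨g, j⟩) =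
      {Sum.inl (C.idx g ((j : ℕ) + 1)), Sum.inl (C.idx g ((j : ℕ) + 2))} := by
  ext a
  simp only [mem_inputs, Finset.mem_insert, Finset.mem_singleton]
  rw [mem_inputs]
  show C.wire2 a (Sum.inr ⟨g, j⟩) ↔ _
  simp only [wire2]
  constructor
  · rintro (rfl | ⟨j', hj', rfl⟩ | ⟨hj, rfl⟩)
    · exact Or.inl rfl
    · have := j'.isLt; omega
    · exact Or.inr rfl
  · rintro (rfl | rfl)
    · exact Or.inl rfl
    · exact Or.inr (Or.inr ⟨h, rfl⟩)

end Circuit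
namespace Circuit

variable {ι : Type} [DecidableEq ι]

lemma msr_inl_lt_inl {C : Circuit ι} {x g : C.Gate} (hw : C.wire x g) :
    C.msr (Sum.inl x) < C.msr (Sum.inl g) := by
  have := msr_lt_of_wire hw 0 (by omega)
  simpa [msr] using this

lemma msr_inl_lt_inr {C : Circuit ι} {x g : C.Gate} (hw : C.wire x g)
    (j : Fin (C.fanin g - 2)) : C.msr (Sum.inl x) < C.msr (Sum.inr ⟨g, j⟩) := by
  have hj : (j : ℕ) < C.fanin g - 2 := j.isLt
  have hK := C.fanin_le_card g
  exact msr_lt_of_wire hw ((j : ℕ) + 1) (by omega)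

lemma msr_inr_lt_inl {C : Circuit ι} {g : C.Gate} (j : Fin (C.fanin g - 2)) :
    C.msr (Sum.inr ⟨g, j⟩) < C.msr (Sum.inl g) := by
  simp only [msr]
  have : 0 < (Fintype.card C.Gate + 2) * (C.ht g + 1) := Nat.mul_pos (by omega) (by omega)
  omega

lemma msr_inr_succ_lt {C : Circuit ι} {g : C.Gate} {j j' : Fin (C.fanin g - 2)}
    (h : (j' : ℕ) = (j : ℕ) + 1) : C.msr (Sum.inr ⟨g, j'⟩) < C.msr (Sum.inr ⟨g, j⟩) := by
  simp only [msr]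
  have hj' : (j' : ℕ) < C.fanin g - 2 := j'.isLt
  have hK := C.fanin_le_card g
  have hB : Fintype.card C.Gate + 2 ≤ (Fintype.card C.Gate + 2) * (C.ht g + 1) :=
    Nat.le_mul_of_pos_right _ (by omega)
  omega

/-- Union-combination of two sets of assignments. -/
def setU (A B : Set (Finset ι)) : Set (Finset ι) :=
  {t | ∃ t1 ∈ A, ∃ t2 ∈ B, t = t1 ∪ t2}

lemma andSem_cons {C : Circuit ι} {x : C.Gate} {r : List C.Gate} :
    C.andSem (x :: r) = setU (C.S x) (C.andSem r) := rfl

lemma orSem_cons {C : Circuit ι} {x : C.Gate} {r : List C.Gate} :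
    C.orSem (x :: r) = C.S x ∪ C.orSem r := rfl

lemma andSem_pair {C : Circuit ι} {x y : C.Gate} :
    C.andSem [x, y] = setU (C.S x) (C.S y) := by
  rw [andSem_cons, andSem_singleton]

lemma orSem_pair {C : Circuit ι} {x y : C.Gate} :
    C.orSem [x, y] = C.S x ∪ C.S y := by
  rw [orSem_cons, orSem_cons]
  simp [orSem]

lemma setU_congr {A A' B B' : Set (Finset ι)} (h1 : A = A') (h2 : B = B') :
    setU A B = setU A' B' := by rw [h1, h2]

/-- The intended captured set of each gate of `C.bin`. -/
noncomputable def binT (C : Circuit ι) : (C.Gate ⊕ C.Ext) → Set (Finset ι)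
  | Sum.inl g => C.S g
  | Sum.inr ⟨g, j⟩ =>
      match C.typ g with
      | GateType.and => C.andSem ((C.inList g).drop ((j : ℕ) + 1))
      | GateType.or => C.orSem ((C.inList g).drop ((j : ℕ) + 1))
      | GateType.var => ∅

lemma bin_S (C : Circuit ι) : ∀ n : C.bin.Gate, C.bin.S n = C.binT n := by
  suffices H : ∀ N : ℕ, ∀ n : C.bin.Gate, C.msr n < N → C.bin.S n = C.binT n by
    intro n; exact H (C.msr n + 1) n (Nat.lt_succ_self _)
  intro N
  induction N with
  | zero => exact fun n hn => absurd hn (by omega)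
  | succ N ih =>
    intro n hn
    have IH : ∀ m : C.bin.Gate, C.msr m < C.msr n → C.bin.S m = C.binT m :=
      fun m hm => ih m (by omega)
    rcases n with g | ⟨g, j⟩
    · -- original gate
      show C.bin.S (Sum.inl g) = C.S g
      rcases htyp : C.typ g with _ | _ | _
      · -- var
        rw [S_var (show C.bin.typ (Sum.inl g) = GateType.var from htyp), S_var htyp]
        rfl
      · -- and
        by_cases h2 : C.fanin g ≤ 2
        · have hnd : ((C.inList g).map (Sum.inl : C.Gate → C.Gate ⊕ C.Ext)).Nodup :=
            (List.nodup_map_iff Sum.inl_injective).mpr (C.inList_nodup g)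
          have hto : ((C.inList g).map (Sum.inl : C.Gate → C.Gate ⊕ C.Ext)).toFinset
              = C.bin.inputs (Sum.inl g) := by
            ext a
            simp only [List.mem_toFinset, List.mem_map, mem_inList,
              bin_inputs_small h2, Finset.mem_image]
          rw [S_eq_andSem (show C.bin.typ (Sum.inl g) = GateType.and from htyp) hnd hto]
          rw [S_eq_andSem htyp (C.inList_nodup g) (C.inList_toFinset g)]
          -- transport over map inl
          have : ∀ l : List C.Gate, (∀ x ∈ l, C.wire x g) →
              C.bin.andSem (l.map Sum.inl) = C.andSem l := by
            intro l
            induction l with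
            | nil => intro _; rfl
            | cons x r ihr =>
              intro hall
              rw [List.map_cons, andSem_cons, andSem_cons]
              exact setU_congr
                (IH (Sum.inl x) (msr_inl_lt_inl (hall x (List.mem_cons_self))))
                (ihr (fun y hy => hall y (List.mem_cons_of_mem x hy)))
          exact this _ (fun x hx => mem_inputs.mp (mem_inList.mp hx))
        · push_neg at h2
          have h3 : 3 ≤ C.fanin g := h2
          have hnd : ([Sum.inl (C.idx g 0), Sum.inr ⟨g, ⟨0, by omega⟩⟩] :
              List C.bin.Gate).Nodup := by simp
          have hto : ([Sum.inl (C.idx g 0), Sum.inr ⟨g, ⟨0, by omega⟩⟩] :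
              List C.bin.Gate).toFinset = C.bin.inputs (Sum.inl g) := by
            rw [bin_inputs_big h3]; simp
          rw [S_eq_andSem (show C.bin.typ (Sum.inl g) = GateType.and from htyp) hnd hto,
            andSem_pair]
          have e1 : C.bin.S (Sum.inl (C.idx g 0)) = C.S (C.idx g 0) :=
            IH _ (msr_inl_lt_inl (C.wire_idx (by omega)))
          have e2 : C.bin.S (Sum.inr ⟨g, ⟨0, by omega⟩⟩) =
              C.andSem ((C.inList g).drop 1) := by
            rw [IH _ (msr_inr_lt_inl _)]
            show C.binT (Sum.inr ⟨g, ⟨0, by omega⟩⟩) = _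
            simp only [binT, htyp]
          rw [setU_congr e1 e2, S_eq_andSem htyp (C.inList_nodup g) (C.inList_toFinset g)]
          have : C.inList g = C.idx g 0 :: (C.inList g).drop 1 := by
            have := drop_inList_cons (C := C) (g := g) (b := 0) (by omega)
            rwa [List.drop_zero] at this
          conv_rhs => rw [this]
          rw [andSem_cons]
      · -- or
        by_cases h2 : C.fanin g ≤ 2
        · have hto : ((C.inList g).map Sum.inl).toFinset = C.bin.inputs (Sum.inl g) := by
            ext a
            simp only [List.mem_toFinset, List.mem_map, mem_inList,
              bin_inputs_small h2, Finset.mem_image]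
          rw [S_eq_orSem (show C.bin.typ (Sum.inl g) = GateType.or from htyp) hto]
          rw [S_eq_orSem htyp (C.inList_toFinset g)]
          have : ∀ l : List C.Gate, (∀ x ∈ l, C.wire x g) →
              C.bin.orSem (l.map Sum.inl) = C.orSem l := by
            intro l
            induction l with
            | nil => intro _; rfl
            | cons x r ihr =>
              intro hall
              rw [List.map_cons, orSem_cons, orSem_cons,
                IH (Sum.inl x) (msr_inl_lt_inl (hall x (List.mem_cons_self))),
                ihr (fun y hy => hall y (List.mem_cons_of_mem x hy))]
              rfl
          exact this _ (fun x hx => mem_inputs.mp (mem_inList.mp hx))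
        · push_neg at h2
          have h3 : 3 ≤ C.fanin g := h2
          have hto : ([Sum.inl (C.idx g 0), Sum.inr ⟨g, ⟨0, by omega⟩⟩] :
              List C.bin.Gate).toFinset = C.bin.inputs (Sum.inl g) := by
            rw [bin_inputs_big h3]; simp
          rw [S_eq_orSem (show C.bin.typ (Sum.inl g) = GateType.or from htyp) hto,
            orSem_pair]
          have e1 : C.bin.S (Sum.inl (C.idx g 0)) = C.S (C.idx g 0) :=
            IH _ (msr_inl_lt_inl (C.wire_idx (by omega)))
          have e2 : C.bin.S (Sum.inr ⟨g, ⟨0, by omega⟩⟩) =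
              C.orSem ((C.inList g).drop 1) := by
            rw [IH _ (msr_inr_lt_inl _)]
            show C.binT (Sum.inr ⟨g, ⟨0, by omega⟩⟩) = _
            simp only [binT, htyp]
          rw [e1, e2, S_eq_orSem htyp (C.inList_toFinset g)]
          have : C.inList g = C.idx g 0 :: (C.inList g).drop 1 := by
            have := drop_inList_cons (C := C) (g := g) (b := 0) (by omega)
            rwa [List.drop_zero] at this
          conv_rhs => rw [this]
          rw [orSem_cons]
    · -- chain node
      have h3 : 3 ≤ C.fanin g := fanin_pos_of_ext j
      have hjlt : (j : ℕ) < C.fanin g - 2 := j.isLt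
      have hj1 : (j : ℕ) + 1 < C.fanin g := by omega
      rcases htyp : C.typ g with _ | _ | _
      · exact absurd (fanin_var htyp) (by omega)
      · -- and chain
        show C.bin.S (Sum.inr ⟨g, j⟩) = C.binT (Sum.inr ⟨g, j⟩)
        have hbt : C.binT (Sum.inr ⟨g, j⟩) = C.andSem ((C.inList g).drop ((j : ℕ) + 1)) := by
          simp only [binT, htyp]
        rw [hbt]
        rcases Nat.lt_or_ge ((j : ℕ) + 1) (C.fanin g - 2) with hmid | hlast
        · have hto : ([Sum.inl (C.idx g ((j : ℕ) + 1)), Sum.inr ⟨g, ⟨(j : ℕ) + 1, hmid⟩⟩] :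
              List C.bin.Gate).toFinset = C.bin.inputs (Sum.inr ⟨g, j⟩) := by
            rw [bin_inputs_mid hmid]; simp
          rw [S_eq_andSem (show C.bin.typ (Sum.inr ⟨g, j⟩) = GateType.and from htyp)
            (by simp) hto, andSem_pair]
          have e1 : C.bin.S (Sum.inl (C.idx g ((j : ℕ) + 1))) = C.S (C.idx g ((j : ℕ) + 1)) :=
            IH _ (msr_inl_lt_inr (C.wire_idx hj1) j)
          have e2 : C.bin.S (Sum.inr ⟨g, ⟨(j : ℕ) + 1, hmid⟩⟩) =
              C.andSem ((C.inList g).drop ((j : ℕ) + 2)) := by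
            rw [IH _ (msr_inr_succ_lt (by simp))]
            show C.binT _ = _
            simp only [binT, htyp]
          rw [setU_congr e1 e2, drop_inList_cons hj1, andSem_cons]
        · have hlast' : (j : ℕ) + 1 = C.fanin g - 2 := by omega
          have hj2 : (j : ℕ) + 2 < C.fanin g := by omega
          have hne : C.idx g ((j : ℕ) + 1) ≠ C.idx g ((j : ℕ) + 2) := by
            intro h; have := idx_inj hj1 hj2 h; omega
          have hto : ([Sum.inl (C.idx g ((j : ℕ) + 1)), Sum.inl (C.idx g ((j : ℕ) + 2))] :
              List C.bin.Gate).toFinset = C.bin.inputs (Sum.inr ⟨g, j⟩) := by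
            rw [bin_inputs_last hlast']; simp
          rw [S_eq_andSem (show C.bin.typ (Sum.inr ⟨g, j⟩) = GateType.and from htyp)
            (by
              refine List.nodup_cons.mpr ⟨?_, List.nodup_singleton _⟩
              simp only [List.mem_singleton]
              exact fun h => hne (Sum.inl.inj h)) hto, andSem_pair]
          have e1 : C.bin.S (Sum.inl (C.idx g ((j : ℕ) + 1))) = C.S (C.idx g ((j : ℕ) + 1)) :=
            IH _ (msr_inl_lt_inr (C.wire_idx hj1) j)
          have e2 : C.bin.S (Sum.inl (C.idx g ((j : ℕ) + 2))) = C.S (C.idx g ((j : ℕ) + 2)) :=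
            IH _ (msr_inl_lt_inr (C.wire_idx hj2) j)
          rw [setU_congr e1 e2, drop_inList_cons hj1,
            show (j : ℕ) + 1 + 1 = (j : ℕ) + 2 from rfl, drop_inList_cons hj2,
            drop_inList_nil (by omega), andSem_cons, andSem_cons]
          congr 1
          ext t
          simp [setU, andSem]
      · -- or chain
        show C.bin.S (Sum.inr ⟨g, j⟩) = C.binT (Sum.inr ⟨g, j⟩)
        have hbt : C.binT (Sum.inr ⟨g, j⟩) = C.orSem ((C.inList g).drop ((j : ℕ) + 1)) := by
          simp only [binT, htyp]
        rw [hbt]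
        rcases Nat.lt_or_ge ((j : ℕ) + 1) (C.fanin g - 2) with hmid | hlast
        · have hto : ([Sum.inl (C.idx g ((j : ℕ) + 1)), Sum.inr ⟨g, ⟨(j : ℕ) + 1, hmid⟩⟩] :
              List C.bin.Gate).toFinset = C.bin.inputs (Sum.inr ⟨g, j⟩) := by
            rw [bin_inputs_mid hmid]; simp
          rw [S_eq_orSem (show C.bin.typ (Sum.inr ⟨g, j⟩) = GateType.or from htyp) hto,
            orSem_pair]
          have e1 : C.bin.S (Sum.inl (C.idx g ((j : ℕ) + 1))) = C.S (C.idx g ((j : ℕ) + 1)) :=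
            IH _ (msr_inl_lt_inr (C.wire_idx hj1) j)
          have e2 : C.bin.S (Sum.inr ⟨g, ⟨(j : ℕ) + 1, hmid⟩⟩) =
              C.orSem ((C.inList g).drop ((j : ℕ) + 2)) := by
            rw [IH _ (msr_inr_succ_lt (by simp))]
            show C.binT _ = _
            simp only [binT, htyp]
          rw [e1, e2, drop_inList_cons hj1, orSem_cons]
        · have hlast' : (j : ℕ) + 1 = C.fanin g - 2 := by omega
          have hj2 : (j : ℕ) + 2 < C.fanin g := by omega
          have hto : ([Sum.inl (C.idx g ((j : ℕ) + 1)), Sum.inl (C.idx g ((j : ℕ) + 2))] :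
              List C.bin.Gate).toFinset = C.bin.inputs (Sum.inr ⟨g, j⟩) := by
            rw [bin_inputs_last hlast']; simp
          rw [S_eq_orSem (show C.bin.typ (Sum.inr ⟨g, j⟩) = GateType.or from htyp) hto,
            orSem_pair]
          have e1 : C.bin.S (Sum.inl (C.idx g ((j : ℕ) + 1))) = C.S (C.idx g ((j : ℕ) + 1)) :=
            IH _ (msr_inl_lt_inr (C.wire_idx hj1) j)
          have e2 : C.bin.S (Sum.inl (C.idx g ((j : ℕ) + 2))) = C.S (C.idx g ((j : ℕ) + 2)) :=
            IH _ (msr_inl_lt_inr (C.wire_idx hj2) j)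
          rw [e1, e2, drop_inList_cons hj1,
            show (j : ℕ) + 1 + 1 = (j : ℕ) + 2 from rfl, drop_inList_cons hj2,
            drop_inList_nil (by omega), orSem_cons, orSem_cons]
          simp [orSem]

lemma bin_S_inl (C : Circuit ι) (g : C.Gate) : C.bin.S (Sum.inl g) = C.S g :=
  C.bin_S (Sum.inl g)

lemma bin_S_inr_and {C : Circuit ι} {g : C.Gate} (htyp : C.typ g = GateType.and)
    (j : Fin (C.fanin g - 2)) :
    C.bin.S (Sum.inr ⟨g, j⟩) = C.andSem ((C.inList g).drop ((j : ℕ) + 1)) := by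
  rw [C.bin_S (Sum.inr ⟨g, j⟩)]
  simp only [binT, htyp]

lemma bin_S_inr_or {C : Circuit ι} {g : C.Gate} (htyp : C.typ g = GateType.or)
    (j : Fin (C.fanin g - 2)) :
    C.bin.S (Sum.inr ⟨g, j⟩) = C.orSem ((C.inList g).drop ((j : ℕ) + 1)) := by
  rw [C.bin_S (Sum.inr ⟨g, j⟩)]
  simp only [binT, htyp]

end Circuit
namespace Circuit

variable {ι : Type} [DecidableEq ι]

lemma bin_fanin_le (C : Circuit ι) (n : C.bin.Gate) : C.bin.fanin n ≤ 2 := by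
  rcases n with g | ⟨g, j⟩
  · by_cases h2 : C.fanin g ≤ 2
    · rw [fanin, bin_inputs_small h2]
      exact le_trans Finset.card_image_le h2
    · rw [fanin, bin_inputs_big (by omega)]
      exact le_trans (Finset.card_insert_le _ _) (by simp)
  · have hjlt : (j : ℕ) < C.fanin g - 2 := j.isLt
    rcases Nat.lt_or_ge ((j : ℕ) + 1) (C.fanin g - 2) with hmid | hlast
    · rw [fanin, bin_inputs_mid hmid]
      exact le_trans (Finset.card_insert_le _ _) (by simp)
    · rw [fanin, bin_inputs_last (by omega)]
      exact le_trans (Finset.card_insert_le _ _) (by simp)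

lemma bin_varInj (C : Circuit ι) (h : C.VarInj) : C.bin.VarInj := by
  intro a ha b hb heq
  rcases a with ga | ⟨ga, ja⟩
  · rcases b with gb | ⟨gb, jb⟩
    · have hga : C.typ ga = GateType.var := ha
      have hgb : C.typ gb = GateType.var := hb
      have : ga = gb := h hga hgb heq
      rw [this]
    · have hgb : C.typ gb = GateType.var := hb
      have := jb.isLt
      have := fanin_var hgb
      omega
  · have hga : C.typ ga = GateType.var := ha
    have := ja.isLt
    have := fanin_var hga
    omega

lemma bin_captured (C : Circuit ι) : C.bin.captured = C.captured := by
  rw [captured, captured]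
  exact C.bin_S_inl C.output

lemma ncard_wire_eq_sum (D : Circuit ι) :
    {p : D.Gate × D.Gate | D.wire p.1 p.2}.ncard = ∑ b : D.Gate, D.fanin b := by
  classical
  have h1 : {p : D.Gate × D.Gate | D.wire p.1 p.2}.ncard =
      (Finset.univ.filter (fun p : D.Gate × D.Gate => D.wire p.1 p.2)).card := by
    rw [← Set.ncard_coe_finset]
    congr 1
    ext p
    simp
  rw [h1]
  rw [Finset.card_eq_sum_card_fiberwise
    (f := fun p : D.Gate × D.Gate => p.2) (t := Finset.univ) (fun _ _ => Finset.mem_univ _)]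
  apply Finset.sum_congr rfl
  intro b _
  have he : Finset.filter (fun p : D.Gate × D.Gate => p.2 = b)
      (Finset.filter (fun p : D.Gate × D.Gate => D.wire p.1 p.2) Finset.univ)
      = (D.inputs b).map ⟨fun a => (a, b), fun x y hxy => congrArg Prod.fst hxy⟩ := by
    ext p
    simp only [Finset.mem_filter, Finset.mem_univ, true_and, Finset.mem_map,
      Function.Embedding.coeFn_mk, mem_inputs]
    constructor
    · rintro ⟨hw, rfl⟩
      exact ⟨p.1, hw, rfl⟩
    · rintro ⟨a, ha, rfl⟩
      exact ⟨ha, rfl⟩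
  rw [he, Finset.card_map, fanin]

lemma card_bin_gate (C : Circuit ι) :
    Fintype.card C.bin.Gate = Fintype.card C.Gate + ∑ g : C.Gate, (C.fanin g - 2) := by
  show Fintype.card (C.Gate ⊕ C.Ext) = _
  rw [Fintype.card_sum]
  congr 1
  rw [Fintype.card_sigma]
  simp

lemma size_bin_le (C : Circuit ι) : C.bin.size ≤ 3 * C.size := by
  have hw : {p : C.bin.Gate × C.bin.Gate | C.bin.wire p.1 p.2}.ncard
      = ∑ b : C.bin.Gate, C.bin.fanin b := ncard_wire_eq_sum C.bin
  have hw' : ∑ b : C.bin.Gate, C.bin.fanin b ≤ 2 * Fintype.card C.bin.Gate := by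
    calc ∑ b : C.bin.Gate, C.bin.fanin b ≤ ∑ _b : C.bin.Gate, 2 :=
          Finset.sum_le_sum (fun b _ => C.bin_fanin_le b)
      _ = 2 * Fintype.card C.bin.Gate := by
          rw [Finset.sum_const, Finset.card_univ]; ring
  have hsz : C.bin.size ≤ 3 * Fintype.card C.bin.Gate := by
    rw [size, hw]; omega
  have hcard : Fintype.card C.bin.Gate ≤ C.size := by
    rw [card_bin_gate, size, ncard_wire_eq_sum C]
    have h2 : ∑ g : C.Gate, (C.fanin g - 2) ≤ ∑ g : C.Gate, C.fanin g :=
      Finset.sum_le_sum (fun g _ => Nat.sub_le _ _)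
    omega
  calc C.bin.size ≤ 3 * Fintype.card C.bin.Gate := hsz
    _ ≤ 3 * C.size := by omega

end Circuit
namespace Circuit

variable {ι : Type} [DecidableEq ι]

/-- Base gate of a node of `C.bin`. -/
def proj (C : Circuit ι) : (C.Gate ⊕ C.Ext) → C.Gate := Sum.elim id Sigma.fst

lemma bin_zeroValid_inl {C : Circuit ι} {x : C.Gate} :
    C.bin.ZeroValid (Sum.inl x) ↔ C.ZeroValid x := by
  rw [ZeroValid, ZeroValid, bin_S_inl]

lemma wire2_inl_cases {C : Circuit ι} {x : C.Gate} {b : C.Gate ⊕ C.Ext}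
    (h : C.wire2 (Sum.inl x) b) :
    (∃ g', b = Sum.inl g' ∧ C.wire x g' ∧
        (C.fanin g' ≤ 2 ∨ (3 ≤ C.fanin g' ∧ x = C.idx g' 0))) ∨
    (∃ (g' : C.Gate) (j : Fin (C.fanin g' - 2)), b = Sum.inr ⟨g', j⟩ ∧
        (x = C.idx g' ((j : ℕ) + 1) ∨
          ((j : ℕ) + 1 = C.fanin g' - 2 ∧ x = C.idx g' ((j : ℕ) + 2)))) := by
  rcases b with g' | ⟨g', j⟩
  · left
    simp only [wire2] at h
    split_ifs at h with h3
    · rcases h with h | ⟨j, hj0, hcontra⟩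
      · have hx : x = C.idx g' 0 := Sum.inl.inj h
        exact ⟨g', rfl, hx ▸ C.wire_idx (by omega), Or.inr ⟨h3, hx⟩⟩
      · exact absurd hcontra (by simp)
    · obtain ⟨y, hy, hw⟩ := h
      have : x = y := Sum.inl.inj hy
      exact ⟨g', rfl, this ▸ hw, Or.inl (by omega)⟩
  · right
    have hjlt : (j : ℕ) < C.fanin g' - 2 := j.isLt
    simp only [wire2] at h
    rcases h with h | ⟨j', hj', hcontra⟩ | ⟨hj, h⟩
    · exact ⟨g', j, rfl, Or.inl (Sum.inl.inj h)⟩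
    · exact absurd hcontra (by simp)
    · exact ⟨g', j, rfl, Or.inr ⟨hj, Sum.inl.inj h⟩⟩

lemma wire2_inl_wire {C : Circuit ι} {x : C.Gate} {b : C.Gate ⊕ C.Ext}
    (h : C.wire2 (Sum.inl x) b) : C.wire x (C.proj b) := by
  rcases wire2_inl_cases h with ⟨g', rfl, hw, _⟩ | ⟨g', j, rfl, hx⟩
  · exact hw
  · have hjlt : (j : ℕ) < C.fanin g' - 2 := j.isLt
    rcases hx with rfl | ⟨hj, rfl⟩
    · exact C.wire_idx (by omega)
    · exact C.wire_idx (by omega)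

lemma bin_pure_inl {C : Circuit ι} {x : C.Gate} {b : C.Gate ⊕ C.Ext}
    (h : C.bin.PureWire (Sum.inl x) b) : C.PureWire x (C.proj b) := by
  obtain ⟨hw, hcase⟩ := h
  have hw2 : C.wire2 (Sum.inl x) b := hw
  refine ⟨wire2_inl_wire hw2, ?_⟩
  rcases wire2_inl_cases hw2 with ⟨g', rfl, hwx, hsub⟩ | ⟨g', j, rfl, hx⟩
  · -- target is an original gate
    have hproj : C.proj (Sum.inl g') = g' := rfl
    rw [hproj]
    rcases hcase with htor | ⟨htand, hothers⟩
    · exact Or.inl htor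
    · refine Or.inr ⟨htand, ?_⟩
      intro h' hh' hne
      rcases hsub with h2 | ⟨h3, rfl⟩
      · have hmem : Sum.inl h' ∈ C.bin.inputs (Sum.inl g') := by
          rw [bin_inputs_small h2]
          exact Finset.mem_image_of_mem _ hh'
        have := hothers (Sum.inl h') hmem (fun hc => hne (Sum.inl.inj hc))
        exact bin_zeroValid_inl.mp this
      · -- x = idx g' 0, fanin g' ≥ 3
        have hmem : (Sum.inr ⟨g', ⟨0, by omega⟩⟩ : C.Gate ⊕ C.Ext) ∈
            C.bin.inputs (Sum.inl g') := by
          rw [bin_inputs_big h3]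
          simp
        have hzv := hothers _ hmem (by simp)
        have htand' : C.typ g' = GateType.and := htand
        have hzv' : (∅ : Finset ι) ∈ C.andSem ((C.inList g').drop 1) := by
          have := bin_S_inr_and htand' (⟨0, by omega⟩ : Fin (C.fanin g' - 2))
          rw [ZeroValid, this] at hzv
          simpa using hzv
        have hall := empty_mem_andSem.mp hzv'
        obtain ⟨i, hi, rfl⟩ := mem_inputs_exists_idx hh'
        have hi0 : i ≠ 0 := fun hc => hne (by rw [hc])
        exact hall _ (mem_drop_inList.mpr ⟨i, by omega, hi, rfl⟩)
  · -- target is a chain node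
    have hjlt : (j : ℕ) < C.fanin g' - 2 := j.isLt
    have hproj : C.proj (Sum.inr ⟨g', j⟩) = g' := rfl
    rw [hproj]
    rcases hcase with htor | ⟨htand, hothers⟩
    · exact Or.inl htor
    · refine Or.inr ⟨htand, ?_⟩
      have htand' : C.typ g' = GateType.and := htand
      intro h' hh' hne
      obtain ⟨i, hi, rfl⟩ := mem_inputs_exists_idx hh'
      rcases Nat.lt_or_ge ((j : ℕ) + 1) (C.fanin g' - 2) with hmid | hlast
      · -- middle chain node; the only claimed wires are x = idx (j+1)
        rcases hx with rfl | ⟨hj, _⟩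
        swap
        · omega
        have hine : i ≠ (j : ℕ) + 1 := fun hc => hne (by rw [hc])
        have hmem : (Sum.inr ⟨g', ⟨(j : ℕ) + 1, hmid⟩⟩ : C.Gate ⊕ C.Ext) ∈
            C.bin.inputs (Sum.inr ⟨g', j⟩) := by
          rw [bin_inputs_mid hmid]
          simp
        have hzv := hothers _ hmem (by simp)
        have hzv' : (∅ : Finset ι) ∈ C.andSem ((C.inList g').drop ((j : ℕ) + 2)) := by
          have := bin_S_inr_and htand' (⟨(j : ℕ) + 1, hmid⟩ : Fin (C.fanin g' - 2))
          rw [ZeroValid, this] at hzv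
          simpa using hzv
        have hall := empty_mem_andSem.mp hzv'
        rcases Nat.lt_or_ge i ((j : ℕ) + 2) with hilt | hige
        · -- i ≤ j: use sortedness from position fanin-1
          have hlastpos : C.fanin g' - 1 < C.fanin g' := by omega
          have hzlast : C.ZeroValid (C.idx g' (C.fanin g' - 1)) :=
            hall _ (mem_drop_inList.mpr ⟨C.fanin g' - 1, by omega, hlastpos, rfl⟩)
          exact idx_sorted (by omega) hlastpos hzlast
        · exact hall _ (mem_drop_inList.mpr ⟨i, hige, hi, rfl⟩)
      · -- last chain node
        have hlast' : (j : ℕ) + 1 = C.fanin g' - 2 := by omega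
        rcases hx with rfl | ⟨_, rfl⟩
        · -- x = idx (j+1); other input is inl (idx (j+2))
          have hine : i ≠ (j : ℕ) + 1 := fun hc => hne (by rw [hc])
          have hmem : (Sum.inl (C.idx g' ((j : ℕ) + 2)) : C.Gate ⊕ C.Ext) ∈
              C.bin.inputs (Sum.inr ⟨g', j⟩) := by
            rw [bin_inputs_last hlast']
            simp
          have hnex : Sum.inl (C.idx g' ((j : ℕ) + 2)) ≠
              (Sum.inl (C.idx g' ((j : ℕ) + 1)) : C.Gate ⊕ C.Ext) := by
            intro hc
            have := idx_inj (by omega) (by omega) (Sum.inl.inj hc)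
            omega
          have hzv := bin_zeroValid_inl.mp (hothers _ hmem hnex)
          rcases Nat.lt_or_ge i ((j : ℕ) + 2) with hilt | hige
          · exact idx_sorted (by omega) (by omega) hzv
          · have : i = (j : ℕ) + 2 := by omega
            rwa [this]
        · -- x = idx (j+2); other input is inl (idx (j+1))
          have hine : i ≠ (j : ℕ) + 2 := fun hc => hne (by rw [hc])
          have hmem : (Sum.inl (C.idx g' ((j : ℕ) + 1)) : C.Gate ⊕ C.Ext) ∈
              C.bin.inputs (Sum.inr ⟨g', j⟩) := by
            rw [bin_inputs_last hlast']
            simp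
          have hnex : Sum.inl (C.idx g' ((j : ℕ) + 1)) ≠
              (Sum.inl (C.idx g' ((j : ℕ) + 2)) : C.Gate ⊕ C.Ext) := by
            intro hc
            have := idx_inj (by omega) (by omega) (Sum.inl.inj hc)
            omega
          have hzv := bin_zeroValid_inl.mp (hothers _ hmem hnex)
          have hile : i ≤ (j : ℕ) + 1 := by omega
          exact idx_sorted hile (by omega) hzv

/-- The node of `C.bin` that consumes the `i`-th input of `g'`. -/
noncomputable def nodeOf (C : Circuit ι) (g' : C.Gate) (i : ℕ) : C.Gate ⊕ C.Ext :=
  if h : C.fanin g' ≤ 2 ∨ i = 0 then Sum.inl g'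
  else Sum.inr ⟨g', ⟨min (i - 1) (C.fanin g' - 3), by omega⟩⟩

lemma proj_nodeOf {C : Circuit ι} {g' : C.Gate} {i : ℕ} : C.proj (C.nodeOf g' i) = g' := by
  rw [nodeOf]
  split_ifs <;> rfl

lemma wire2_inl_nodeOf {C : Circuit ι} {x : C.Gate} {b : C.Gate ⊕ C.Ext}
    (h : C.wire2 (Sum.inl x) b) :
    ∃ (g' : C.Gate) (i : ℕ), i < C.fanin g' ∧ x = C.idx g' i ∧ b = C.nodeOf g' i := by
  rcases wire2_inl_cases h with ⟨g', rfl, hw, hsub⟩ | ⟨g', j, rfl, hx⟩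
  · rcases hsub with h2 | ⟨h3, rfl⟩
    · obtain ⟨i, hi, rfl⟩ := mem_inputs_exists_idx (mem_inputs.mpr hw)
      exact ⟨g', i, hi, rfl, by rw [nodeOf, dif_pos (Or.inl h2)]⟩
    · exact ⟨g', 0, by omega, rfl, by rw [nodeOf, dif_pos (Or.inr rfl)]⟩
  · have hjlt : (j : ℕ) < C.fanin g' - 2 := j.isLt
    rcases hx with rfl | ⟨hj, rfl⟩
    · refine ⟨g', (j : ℕ) + 1, by omega, rfl, ?_⟩
      rw [nodeOf, dif_neg (by omega)]
      exact congrArg (fun z : Fin (C.fanin g' - 2) => (Sum.inr ⟨g', z⟩ : C.Gate ⊕ C.Ext))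
        (Fin.ext (by simp only [Fin.val_mk]; omega))
    · refine ⟨g', (j : ℕ) + 2, by omega, rfl, ?_⟩
      rw [nodeOf, dif_neg (by omega)]
      exact congrArg (fun z : Fin (C.fanin g' - 2) => (Sum.inr ⟨g', z⟩ : C.Gate ⊕ C.Ext))
        (Fin.ext (by simp only [Fin.val_mk]; omega))

lemma wire2_inl_target_unique {C : Circuit ι} {x : C.Gate} {b1 b2 : C.Gate ⊕ C.Ext}
    (h1 : C.wire2 (Sum.inl x) b1) (h2 : C.wire2 (Sum.inl x) b2)
    (hp : C.proj b1 = C.proj b2) : b1 = b2 := by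
  obtain ⟨g1, i1, hi1, hx1, rfl⟩ := wire2_inl_nodeOf h1
  obtain ⟨g2, i2, hi2, hx2, rfl⟩ := wire2_inl_nodeOf h2
  have hg : g1 = g2 := by
    rw [proj_nodeOf, proj_nodeOf] at hp
    exact hp
  subst hg
  have : i1 = i2 := idx_inj hi1 hi2 (hx1 ▸ hx2)
  rw [this]

lemma wire2_inr_target_unique {C : Circuit ι} {g : C.Gate} {j : Fin (C.fanin g - 2)}
    {b1 b2 : C.Gate ⊕ C.Ext} (h1 : C.wire2 (Sum.inr ⟨g, j⟩) b1)
    (h2 : C.wire2 (Sum.inr ⟨g, j⟩) b2) : b1 = b2 := by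
  have key : ∀ {b : C.Gate ⊕ C.Ext}, C.wire2 (Sum.inr ⟨g, j⟩) b →
      (b = Sum.inl g ∧ (j : ℕ) = 0) ∨
      (∃ j' : Fin (C.fanin g - 2), b = Sum.inr ⟨g, j'⟩ ∧ (j : ℕ) = (j' : ℕ) + 1) := by
    intro b hb
    rcases b with g' | ⟨g', j'⟩
    · simp only [wire2] at hb
      split_ifs at hb with h3
      · rcases hb with hb | ⟨j0, hj0, hb⟩
        · exact absurd hb (by simp)
        · have hs : (⟨g, j⟩ : C.Ext) = ⟨g', j0⟩ := by injection hb
          obtain ⟨rfl, hj⟩ := Sigma.mk.inj_iff.mp hs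
          have : j = j0 := eq_of_heq hj
          subst this
          exact Or.inl ⟨rfl, hj0⟩
      · obtain ⟨y, hy, _⟩ := hb
        exact absurd hy (by simp)
    · simp only [wire2] at hb
      rcases hb with hb | ⟨j'', hj'', hb⟩ | ⟨_, hb⟩
      · exact absurd hb (by simp)
      · have hs : (⟨g, j⟩ : C.Ext) = ⟨g', j''⟩ := by injection hb
        obtain ⟨rfl, hj⟩ := Sigma.mk.inj_iff.mp hs
        have : j = j'' := eq_of_heq hj
        subst this
        exact Or.inr ⟨j', rfl, hj''⟩
      · exact absurd hb (by simp)
  rcases key h1 with ⟨rfl, hz1⟩ | ⟨j1, rfl, hs1⟩ <;> rcases key h2 with ⟨rfl, hz2⟩ | ⟨j2, rfl, hs2⟩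
  · rfl
  · omega
  · omega
  · have : (j1 : ℕ) = (j2 : ℕ) := by omega
    congr 1
    exact Sigma.ext rfl (heq_of_eq (Fin.ext this))

theorem bin_upDet (C : Circuit ι) (h : C.UpwardsDeterministic) :
    C.bin.UpwardsDeterministic := by
  intro n htypn
  rcases n with x | ⟨g, j⟩
  · have htypx : C.typ x = GateType.and ∨ C.typ x = GateType.or := htypn
    rcases h x htypx with hS | huniq
    · left
      rw [bin_S_inl]
      exact hS
    · right
      intro b1 b2 hp1 hp2
      have q1 := bin_pure_inl hp1
      have q2 := bin_pure_inl hp2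
      have hpe : C.proj b1 = C.proj b2 := huniq _ _ q1 q2
      exact wire2_inl_target_unique hp1.1 hp2.1 hpe
  · right
    intro b1 b2 hp1 hp2
    exact wire2_inr_target_unique hp1.1 hp2.1

end Circuit
namespace Circuit

variable {ι : Type} [DecidableEq ι]

lemma wire2_proj {C : Circuit ι} {a b : C.Gate ⊕ C.Ext} (h : C.wire2 a b) :
    C.wire (C.proj a) (C.proj b) ∨ C.proj a = C.proj b := by
  rcases b with g | ⟨g, j⟩
  · simp only [wire2] at h
    split_ifs at h with h3
    · rcases h with rfl | ⟨j, hj0, rfl⟩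
      · exact Or.inl (C.wire_idx (by omega))
      · exact Or.inr rfl
    · obtain ⟨x, rfl, hw⟩ := h
      exact Or.inl hw
  · have hjlt : (j : ℕ) < C.fanin g - 2 := j.isLt
    simp only [wire2] at h
    rcases h with rfl | ⟨j', hj', rfl⟩ | ⟨hj, rfl⟩
    · exact Or.inl (C.wire_idx (by omega))
    · exact Or.inr rfl
    · exact Or.inl (C.wire_idx (by omega))

lemma reaches_bin_proj {C : Circuit ι} {a b : C.Gate ⊕ C.Ext}
    (h : C.bin.Reaches a b) : C.Reaches (C.proj a) (C.proj b) := by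
  induction h with
  | refl => exact Relation.ReflTransGen.refl
  | tail _ hw ih =>
    rcases wire2_proj hw with hww | heq
    · exact Relation.ReflTransGen.tail ih hww
    · rwa [← heq]

lemma reaches_bin_inl_inl {C : Circuit ι} {v x : C.Gate}
    (h : C.bin.Reaches (Sum.inl v) (Sum.inl x)) : C.Reaches v x :=
  reaches_bin_proj h

lemma reaches_bin_inl_inr {C : Circuit ι} {v g : C.Gate} :
    ∀ (d : ℕ) (j : Fin (C.fanin g - 2)), C.fanin g - 2 - (j : ℕ) ≤ d →
      C.bin.Reaches (Sum.inl v) (Sum.inr ⟨g, j⟩) →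
      ∃ i, (j : ℕ) + 1 ≤ i ∧ i < C.fanin g ∧ C.Reaches v (C.idx g i) := by
  intro d
  induction d with
  | zero =>
    intro j hd _
    have := j.isLt
    omega
  | succ d ihd =>
    intro j hd hr
    have hjlt : (j : ℕ) < C.fanin g - 2 := j.isLt
    rcases (Relation.ReflTransGen.cases_tail hr) with heq | ⟨c, hrc, hw⟩
    · exact absurd heq (by simp)
    · have hw2 : C.wire2 c (Sum.inr ⟨g, j⟩) := hw
      simp only [wire2] at hw2
      rcases hw2 with rfl | ⟨j', hj', rfl⟩ | ⟨hj, rfl⟩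
      · exact ⟨(j : ℕ) + 1, le_refl _, by omega, reaches_bin_inl_inl hrc⟩
      · have hj'lt : (j' : ℕ) < C.fanin g - 2 := j'.isLt
        obtain ⟨i, hi1, hi2, hi3⟩ := ihd j' (by omega) hrc
        exact ⟨i, by omega, hi2, hi3⟩
      · exact ⟨(j : ℕ) + 2, by omega, by omega, reaches_bin_inl_inl hrc⟩

lemma disjoint_S_orSem_drop {C : Circuit ι} {g : C.Gate}
    (hdet : C.DeterministicOr g) {a b : ℕ} (ha : a < C.fanin g) (hab : a < b) :
    Disjoint (C.S (C.idx g a)) (C.orSem ((C.inList g).drop b)) := by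
  rw [Set.disjoint_left]
  intro t ht hto
  obtain ⟨x, hx, htx⟩ := mem_orSem.mp hto
  obtain ⟨i, hbi, hi, rfl⟩ := mem_drop_inList.mp hx
  have hne : C.idx g a ≠ C.idx g i := fun hc => by
    have := idx_inj ha hi hc
    omega
  exact Set.disjoint_left.mp (hdet _ _ (idx_mem ha) (idx_mem hi) hne) ht htx

theorem bin_dDNNF (C : Circuit ι) (hd : C.dDNNF) : C.bin.dDNNF := by
  constructor
  · -- decomposability of AND-gates
    intro n htypn v' n1 n2 hv' h1 h2 hne hr1 hr2
    -- the variable gate is an original gate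
    obtain ⟨v, rfl⟩ : ∃ v, v' = Sum.inl v := by
      rcases v' with v | ⟨gv, jv⟩
      · exact ⟨v, rfl⟩
      · have : C.typ gv = GateType.var := hv'
        have := fanin_var this
        have := jv.isLt
        omega
    have hvar : C.typ v = GateType.var := hv'
    -- produce two distinct input positions of the base gate reached by v
    rcases n with g | ⟨g, j⟩
    · have htyp : C.typ g = GateType.and := htypn
      by_cases hf2 : C.fanin g ≤ 2
      · rw [bin_inputs_small hf2] at h1 h2
        obtain ⟨x1, hx1, rfl⟩ := Finset.mem_image.mp h1
        obtain ⟨x2, hx2, rfl⟩ := Finset.mem_image.mp h2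
        exact hd.1 g htyp v x1 x2 hvar hx1 hx2
          (fun hc => hne (by rw [hc])) (reaches_bin_inl_inl hr1) (reaches_bin_inl_inl hr2)
      · have h3 : 3 ≤ C.fanin g := by omega
        rw [bin_inputs_big h3] at h1 h2
        simp only [Finset.mem_insert, Finset.mem_singleton] at h1 h2
        have key : ∀ {m1 m2 : C.Gate ⊕ C.Ext},
            m1 = Sum.inl (C.idx g 0) → m2 = Sum.inr ⟨g, ⟨0, by omega⟩⟩ →
            C.bin.Reaches (Sum.inl v) m1 → C.bin.Reaches (Sum.inl v) m2 → False := by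
          rintro m1 m2 rfl rfl hq1 hq2
          obtain ⟨i, hi1, hi2, hi3⟩ := reaches_bin_inl_inr (C.fanin g) _ (by omega) hq2
          refine hd.1 g htyp v (C.idx g 0) (C.idx g i) hvar (idx_mem (by omega)) (idx_mem hi2)
            (fun hc => ?_) (reaches_bin_inl_inl hq1) hi3
          have := idx_inj (by omega) hi2 hc
          omega
        rcases h1 with rfl | rfl <;> rcases h2 with rfl | rfl
        · exact hne rfl
        · exact key rfl rfl hr1 hr2
        · exact key rfl rfl hr2 hr1
        · exact hne rfl
    · have htyp : C.typ g = GateType.and := htypn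
      have hjlt : (j : ℕ) < C.fanin g - 2 := j.isLt
      rcases Nat.lt_or_ge ((j : ℕ) + 1) (C.fanin g - 2) with hmid | hlast
      · rw [bin_inputs_mid hmid] at h1 h2
        simp only [Finset.mem_insert, Finset.mem_singleton] at h1 h2
        have key : ∀ {m1 m2 : C.Gate ⊕ C.Ext},
            m1 = Sum.inl (C.idx g ((j : ℕ) + 1)) → m2 = Sum.inr ⟨g, ⟨(j : ℕ) + 1, hmid⟩⟩ →
            C.bin.Reaches (Sum.inl v) m1 → C.bin.Reaches (Sum.inl v) m2 → False := by
          rintro m1 m2 rfl rfl hq1 hq2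
          obtain ⟨i, hi1, hi2, hi3⟩ := reaches_bin_inl_inr (C.fanin g) _ (by omega) hq2
          simp only [Fin.val_mk] at hi1
          refine hd.1 g htyp v (C.idx g ((j : ℕ) + 1)) (C.idx g i) hvar
            (idx_mem (by omega)) (idx_mem hi2)
            (fun hc => ?_) (reaches_bin_inl_inl hq1) hi3
          have := idx_inj (by omega) hi2 hc
          omega
        rcases h1 with rfl | rfl <;> rcases h2 with rfl | rfl
        · exact hne rfl
        · exact key rfl rfl hr1 hr2
        · exact key rfl rfl hr2 hr1
        · exact hne rfl
      · have hlast' : (j : ℕ) + 1 = C.fanin g - 2 := by omega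
        rw [bin_inputs_last hlast'] at h1 h2
        simp only [Finset.mem_insert, Finset.mem_singleton] at h1 h2
        have key : ∀ {m1 m2 : C.Gate ⊕ C.Ext},
            m1 = Sum.inl (C.idx g ((j : ℕ) + 1)) → m2 = Sum.inl (C.idx g ((j : ℕ) + 2)) →
            C.bin.Reaches (Sum.inl v) m1 → C.bin.Reaches (Sum.inl v) m2 → False := by
          rintro m1 m2 rfl rfl hq1 hq2
          refine hd.1 g htyp v (C.idx g ((j : ℕ) + 1)) (C.idx g ((j : ℕ) + 2)) hvar
            (idx_mem (by omega)) (idx_mem (by omega))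
            (fun hc => ?_) (reaches_bin_inl_inl hq1) (reaches_bin_inl_inl hq2)
          have := idx_inj (by omega) (by omega) hc
          omega
        rcases h1 with rfl | rfl <;> rcases h2 with rfl | rfl
        · exact hne rfl
        · exact key rfl rfl hr1 hr2
        · exact key rfl rfl hr2 hr1
        · exact hne rfl
  · -- determinism of OR-gates
    intro n htypn n1 n2 h1 h2 hne
    rcases n with g | ⟨g, j⟩
    · have htyp : C.typ g = GateType.or := htypn
      have hdet := hd.2 g htyp
      by_cases hf2 : C.fanin g ≤ 2
      · rw [bin_inputs_small hf2] at h1 h2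
        obtain ⟨x1, hx1, rfl⟩ := Finset.mem_image.mp h1
        obtain ⟨x2, hx2, rfl⟩ := Finset.mem_image.mp h2
        rw [bin_S_inl, bin_S_inl]
        exact hdet x1 x2 hx1 hx2 (fun hc => hne (by rw [hc]))
      · have h3 : 3 ≤ C.fanin g := by omega
        rw [bin_inputs_big h3] at h1 h2
        simp only [Finset.mem_insert, Finset.mem_singleton] at h1 h2
        have key : Disjoint (C.bin.S (Sum.inl (C.idx g 0)))
            (C.bin.S (Sum.inr ⟨g, ⟨0, by omega⟩⟩)) := by
          rw [bin_S_inl, bin_S_inr_or htyp]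
          exact disjoint_S_orSem_drop hdet (by omega) (by omega)
        rcases h1 with rfl | rfl <;> rcases h2 with rfl | rfl
        · exact absurd rfl hne
        · exact key
        · exact key.symm
        · exact absurd rfl hne
    · have htyp : C.typ g = GateType.or := htypn
      have hdet := hd.2 g htyp
      have hjlt : (j : ℕ) < C.fanin g - 2 := j.isLt
      rcases Nat.lt_or_ge ((j : ℕ) + 1) (C.fanin g - 2) with hmid | hlast
      · rw [bin_inputs_mid hmid] at h1 h2
        simp only [Finset.mem_insert, Finset.mem_singleton] at h1 h2
        have key : Disjoint (C.bin.S (Sum.inl (C.idx g ((j : ℕ) + 1))))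
            (C.bin.S (Sum.inr ⟨g, ⟨(j : ℕ) + 1, hmid⟩⟩)) := by
          rw [bin_S_inl, bin_S_inr_or htyp]
          exact disjoint_S_orSem_drop hdet (by omega) (by simp)
        rcases h1 with rfl | rfl <;> rcases h2 with rfl | rfl
        · exact absurd rfl hne
        · exact key
        · exact key.symm
        · exact absurd rfl hne
      · have hlast' : (j : ℕ) + 1 = C.fanin g - 2 := by omega
        rw [bin_inputs_last hlast'] at h1 h2
        simp only [Finset.mem_insert, Finset.mem_singleton] at h1 h2
        have key : Disjoint (C.bin.S (Sum.inl (C.idx g ((j : ℕ) + 1))))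
            (C.bin.S (Sum.inl (C.idx g ((j : ℕ) + 2)))) := by
          rw [bin_S_inl, bin_S_inl]
          refine hdet _ _ (idx_mem (by omega)) (idx_mem (by omega)) (fun hc => ?_)
          have := idx_inj (by omega) (by omega) hc
          omega
        rcases h1 with rfl | rfl <;> rcases h2 with rfl | rfl
        · exact absurd rfl hne
        · exact key
        · exact key.symm
        · exact absurd rfl hne

end Circuit
/-- Reduction to arity-two preserving upwards-determinism: there is a universal
constant `c` such that every monotone circuit `C` in zero-suppressed semantics that is
upwards-deterministic admits a monotone circuit `C'` with `S(C') = S(C)`, every gate of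
fan-in at most two, and `|C'| ≤ c·|C|`, such that `C'` is upwards-deterministic;
moreover, if `C` is a d-DNNF in zero-suppressed semantics, then `C'` can be chosen to
also be one. -/
theorem stmt17 :
    ∃ c : ℕ, 0 < c ∧
      ∀ (ι : Type) [DecidableEq ι] (C : Circuit ι),
        C.VarInj → C.UpwardsDeterministic →
        ∃ C' : Circuit ι,
          C'.VarInj ∧
          C'.captured = C.captured ∧
          (∀ g : C'.Gate, C'.fanin g ≤ 2) ∧
          C'.size ≤ c * C.size ∧
          C'.UpwardsDeterministic ∧
          (C.dDNNF → C'.dDNNF) := by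
  refine ⟨3, by omega, ?_⟩
  intro ι _ C hvi hup
  exact ⟨C.bin, C.bin_varInj hvi, C.bin_captured, C.bin_fanin_le, C.size_bin_le,
    C.bin_upDet hup, C.bin_dDNNF⟩
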